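/- Let ρ be a probability measure on a measurable space Θ, let L be a Markov kernel from Θ to a measurable space 𝒴, let f : Θ × 𝒴 → ℝ be bounded and measurable, and let ε, δ > 0. Define g(θ) := ∫ f(θ, y) L(θ)(dy), v(θ) := Var_{L(θ)}(f(θ, ·)), Ψ_δ(θ) := g(θ) + δ·v(θ), the inner worst-case density q^θ_δ(y) := 1 + δ·(f(θ, y) − g(θ)) with respect to L(θ), and the outer worst-case density η_ε(θ) := 1 + ε·(Ψ_δ(θ) − ∫ Ψ_δ dρ) with respect to ρ. Then the nested worst-case expected cost satisfies the exact identity ∫_Θ η_ε(θ)·(∫_𝒴 q^θ_δ(y)·f(θ, y) L(θ)(dy)) dρ(θ) = ∫ g dρ + δ·∫ v dρ + ε·Var_ρ(Ψ_δ). -/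

import Mathlib

open MeasureTheory ProbabilityTheory

variable {Ω : Type*} [MeasurableSpace Ω]

/-- Mean of `f` under `P`. -/
noncomputable def meanP (P : Measure Ω) (f : Ω → ℝ) : ℝ := ∫ ω, f ω ∂P

/-- Variance of `f` under `P`. -/
noncomputable def varP (P : Measure Ω) (f : Ω → ℝ) : ℝ :=
  ∫ ω, (f ω - meanP P f) ^ 2 ∂P

/-- Conditional expected cost `g(θ) = ∫ f(θ,y) L(θ)(dy)`. -/
noncomputable def condMean {Θ 𝒴 : Type*} [MeasurableSpace Θ] [MeasurableSpace 𝒴]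
    (L : Kernel Θ 𝒴) (f : Θ × 𝒴 → ℝ) (θ : Θ) : ℝ :=
  ∫ y, f (θ, y) ∂(L θ)

/-- Conditional variance `v(θ) = Var_{L(θ)}(f(θ,·))`. -/
noncomputable def condVar {Θ 𝒴 : Type*} [MeasurableSpace Θ] [MeasurableSpace 𝒴]
    (L : Kernel Θ 𝒴) (f : Θ × 𝒴 → ℝ) (θ : Θ) : ℝ :=
  ∫ y, (f (θ, y) - condMean L f θ) ^ 2 ∂(L θ)

private lemma integrable_of_bdd {Ω : Type*} [MeasurableSpace Ω] {P : Measure Ω}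
    [IsFiniteMeasure P] {h : Ω → ℝ} (hm : Measurable h) {C : ℝ}
    (hb : ∀ ω, |h ω| ≤ C) : Integrable h P := by
  refine Integrable.mono' (integrable_const C) hm.aestronglyMeasurable ?_
  filter_upwards with ω using by simpa using hb ω

private lemma key_identity {Ω : Type*} [MeasurableSpace Ω] (P : Measure Ω)
    [IsProbabilityMeasure P] (a : Ω → ℝ) (ha : Measurable a) {C : ℝ}
    (hb : ∀ ω, |a ω| ≤ C) (t : ℝ) :
    ∫ ω, (1 + t * (a ω - meanP P a)) * a ω ∂P = meanP P a + t * varP P a := by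
  set m := meanP P a with hm
  have hInt : Integrable a P := integrable_of_bdd ha hb
  have hIntsq : Integrable (fun ω => (a ω - m) ^ 2) P := by
    refine integrable_of_bdd ((ha.sub measurable_const).pow_const 2)
      (C := (C + |m|) ^ 2) (fun ω => ?_)
    have h1 : |a ω - m| ≤ C + |m| :=
      (abs_sub _ _).trans (add_le_add (hb ω) le_rfl)
    rw [abs_of_nonneg (sq_nonneg _)]
    nlinarith [sq_abs (a ω - m), abs_nonneg (a ω - m), h1]
  have hIntsub : Integrable (fun ω => a ω - m) P := hInt.sub (integrable_const m)
  have step : ∫ ω, (1 + t * (a ω - m)) * a ω ∂P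
      = ∫ ω, (a ω + t * (a ω - m) ^ 2 + (t * m) * (a ω - m)) ∂P := by
    refine integral_congr_ae (Filter.Eventually.of_forall fun ω => ?_)
    ring
  have hA : Integrable (fun ω => a ω + t * (a ω - m) ^ 2) P := hInt.add (hIntsq.const_mul t)
  have hB : Integrable (fun ω => t * m * (a ω - m)) P := hIntsub.const_mul (t * m)
  rw [step, integral_add hA hB, integral_add hInt (hIntsq.const_mul t), integral_const_mul, integral_const_mul,
    integral_sub hInt (integrable_const m)]
  have h2 : ∫ ω, a ω ∂P = m := rfl
  have h3 : ∫ (_ : Ω), m ∂P = m := by simp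
  rw [h2, h3, sub_self, mul_zero, add_zero]
  rfl

/-- Exact identity for the penalty-form worst-case measure (modified χ²-divergence):
with inner worst-case density `q^θ_δ(y) = 1 + δ(f(θ,y) − g(θ))` w.r.t. `L(θ)`,
`Ψ_δ(θ) = g(θ) + δ·v(θ)`, and outer worst-case density
`η_ε(θ) = 1 + ε(Ψ_δ(θ) − ∫Ψ_δ dρ)` w.r.t. `ρ`, the nested worst-case expected cost is
`∫ η_ε·(∫ q^θ_δ·f dL(θ)) dρ = ∫ g dρ + δ·∫ v dρ + ε·Var_ρ(Ψ_δ)`. -/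
theorem penalty_nested_worst_case_identity
    {Θ 𝒴 : Type*} [MeasurableSpace Θ] [MeasurableSpace 𝒴]
    (ρ : Measure Θ) [IsProbabilityMeasure ρ]
    (L : Kernel Θ 𝒴) [IsMarkovKernel L]
    (f : Θ × 𝒴 → ℝ) (hf : Measurable f) (hf_bdd : ∃ C : ℝ, ∀ p, |f p| ≤ C)
    (ε δ : ℝ) (hε : 0 < ε) (hδ : 0 < δ) :
    ∫ θ,
        (1 + ε * ((condMean L f θ + δ * condVar L f θ)
            - ∫ θ', (condMean L f θ' + δ * condVar L f θ') ∂ρ))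
          * (∫ y, (1 + δ * (f (θ, y) - condMean L f θ)) * f (θ, y) ∂(L θ)) ∂ρ
      = (∫ θ, condMean L f θ ∂ρ) + δ * (∫ θ, condVar L f θ ∂ρ)
        + ε * varP ρ (fun θ => condMean L f θ + δ * condVar L f θ) := by
  
  obtain ⟨C, hC⟩ := hf_bdd
  have hC' : ∀ p, |f p| ≤ |C| := fun p => (hC p).trans (le_abs_self C)
  -- measurability of condMean
  have hg : Measurable (condMean L f) := by
    have := (hf.stronglyMeasurable.integral_kernel_prod_right (κ := L)
      (f := fun θ y => f (θ, y)))
    exact this.measurable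
  -- bound on condMean
  have hgb : ∀ θ, |condMean L f θ| ≤ |C| := by
    intro θ
    have := norm_integral_le_of_norm_le_const (μ := L θ)
      (f := fun y => f (θ, y)) (C := |C|)
      (Filter.Eventually.of_forall fun y => by simpa using hC' (θ, y))
    simpa [condMean] using this
  -- measurability of condVar
  have hv : Measurable (condVar L f) := by
    have hm : StronglyMeasurable (Function.uncurry
        (fun θ y => (f (θ, y) - condMean L f θ) ^ 2)) := by
      have : Measurable (fun p : Θ × 𝒴 => (f p - condMean L f p.1) ^ 2) :=
        (hf.sub (hg.comp measurable_fst)).pow_const 2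
      exact this.stronglyMeasurable
    exact (hm.integral_kernel_prod_right (κ := L)).measurable
  -- bound on condVar
  have hvb : ∀ θ, |condVar L f θ| ≤ (2 * |C|) ^ 2 := by
    intro θ
    have h1 : ∀ y, ‖(f (θ, y) - condMean L f θ) ^ 2‖ ≤ (2 * |C|) ^ 2 := by
      intro y
      have h2 : |f (θ, y) - condMean L f θ| ≤ 2 * |C| := by
        have := (abs_sub (f (θ, y)) (condMean L f θ)).trans
          (add_le_add (hC' (θ, y)) (hgb θ))
        linarith
      have h0 : (0:ℝ) ≤ |f (θ, y) - condMean L f θ| := abs_nonneg _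
      rw [Real.norm_eq_abs, abs_of_nonneg (sq_nonneg _)]
      nlinarith [sq_abs (f (θ, y) - condMean L f θ), h2, h0]
    have := norm_integral_le_of_norm_le_const (μ := L θ)
      (f := fun y => (f (θ, y) - condMean L f θ) ^ 2) (C := (2 * |C|) ^ 2)
      (Filter.Eventually.of_forall h1)
    simpa [_root_.condVar] using this
  -- inner identity
  have inner_eq : ∀ θ,
      (∫ y, (1 + δ * (f (θ, y) - condMean L f θ)) * f (θ, y) ∂(L θ))
        = condMean L f θ + δ * condVar L f θ := by
    intro θ
    have := key_identity (L θ) (fun y => f (θ, y))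
      (hf.comp (measurable_prodMk_left)) (C := |C|)
      (fun y => hC' (θ, y)) δ
    simpa [meanP, varP, condMean, _root_.condVar] using this
  -- Ψ
  set Ψ : Θ → ℝ := fun θ => condMean L f θ + δ * condVar L f θ with hΨ
  have hΨm : Measurable Ψ := hg.add (hv.const_mul δ)
  have hΨb : ∀ θ, |Ψ θ| ≤ |C| + |δ| * (2 * |C|) ^ 2 := by
    intro θ
    calc |Ψ θ| ≤ |condMean L f θ| + |δ * condVar L f θ| := abs_add_le _ _
      _ ≤ |C| + |δ| * (2 * |C|) ^ 2 := by
          rw [abs_mul]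
          exact add_le_add (hgb θ)
            (mul_le_mul_of_nonneg_left (hvb θ) (abs_nonneg δ))
  have outer : ∫ θ, (1 + ε * (Ψ θ - meanP ρ Ψ)) * Ψ θ ∂ρ
      = meanP ρ Ψ + ε * varP ρ Ψ := key_identity ρ Ψ hΨm hΨb ε
  have hgInt : Integrable (condMean L f) ρ := integrable_of_bdd hg hgb
  have hvInt : Integrable (condVar L f) ρ := integrable_of_bdd hv hvb
  have hmean : meanP ρ Ψ
      = (∫ θ, condMean L f θ ∂ρ) + δ * (∫ θ, condVar L f θ ∂ρ) := by
    rw [meanP, hΨ, integral_add hgInt (hvInt.const_mul δ), integral_const_mul]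
  calc ∫ θ, (1 + ε * ((condMean L f θ + δ * condVar L f θ)
          - ∫ θ', (condMean L f θ' + δ * condVar L f θ') ∂ρ))
        * (∫ y, (1 + δ * (f (θ, y) - condMean L f θ)) * f (θ, y) ∂(L θ)) ∂ρ
      = ∫ θ, (1 + ε * (Ψ θ - meanP ρ Ψ)) * Ψ θ ∂ρ := by
        refine integral_congr_ae (Filter.Eventually.of_forall fun θ => ?_)
        show (1 + ε * (Ψ θ - meanP ρ Ψ))
            * (∫ y, (1 + δ * (f (θ, y) - condMean L f θ)) * f (θ, y) ∂(L θ)) = _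
        rw [inner_eq θ]
    _ = meanP ρ Ψ + ε * varP ρ Ψ := outer
    _ = (∫ θ, condMean L f θ ∂ρ) + δ * (∫ θ, condVar L f θ ∂ρ)
        + ε * varP ρ (fun θ => condMean L f θ + δ * condVar L f θ) := by
        rw [hmean]
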